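/- If P and Q are symmetric positive definite real n×n matrices satisfying the Lyapunov equation AᵀP + PA = -Q, and PB = Cᵀ for matrices B ∈ ℝ^{n×m}, C ∈ ℝ^{m×n}, then for the function V(x, Θ) = xᵀPx + tr(Θ K Θᵀ) with K symmetric positive definite, along trajectories ẋ = Ax + BΘᵀη(t), Θ̇ᵀ = -K⁻¹ (Cx) ηᵀ(t), the time derivative of V equals -xᵀQx, which is ≤ 0. -/

import Mathlib

open Matrix

private lemma hd_dot {n : ℕ} {u v : ℝ → Fin n → ℝ} {u' v' : Fin n → ℝ} {t : ℝ}
    (hu : ∀ i, HasDerivAt (fun s => u s i) (u' i) t)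
    (hv : ∀ i, HasDerivAt (fun s => v s i) (v' i) t) :
    HasDerivAt (fun s => u s ⬝ᵥ v s) (u' ⬝ᵥ v t + u t ⬝ᵥ v') t := by
  have h : HasDerivAt (fun s => ∑ i, u s i * v s i)
      (∑ i, (u' i * v t i + u t i * v' i)) t :=
    HasDerivAt.fun_sum fun i _ => (hu i).mul (hv i)
  simpa [dotProduct, Finset.sum_add_distrib] using h

private lemma hd_mulVec {n k : ℕ} {u : ℝ → Fin k → ℝ} {u' : Fin k → ℝ} {t : ℝ}
    (M : Matrix (Fin n) (Fin k) ℝ)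
    (hu : ∀ i, HasDerivAt (fun s => u s i) (u' i) t) (i : Fin n) :
    HasDerivAt (fun s => M.mulVec (u s) i) (M.mulVec u' i) t := by
  simp only [mulVec, dotProduct]
  exact HasDerivAt.fun_sum fun j _ => (hu j).const_mul (M i j)

private lemma mulVec_dot {q r : ℕ} (M : Matrix (Fin q) (Fin r) ℝ)
    (u : Fin r → ℝ) (w : Fin q → ℝ) :
    (M *ᵥ u) ⬝ᵥ w = u ⬝ᵥ (Mᵀ *ᵥ w) := by
  rw [dotProduct_comm, Matrix.dotProduct_mulVec, Matrix.mulVec_transpose, dotProduct_comm]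

/-- Lyapunov stability for the adaptive system:
`V(x,Θ) = xᵀPx + tr(Θ K Θᵀ)` has derivative `-xᵀQx ≤ 0` along trajectories. -/
theorem stmt0 {n m p : ℕ}
    (A : Matrix (Fin n) (Fin n) ℝ) (B : Matrix (Fin n) (Fin m) ℝ)
    (C : Matrix (Fin m) (Fin n) ℝ) (P Q : Matrix (Fin n) (Fin n) ℝ)
    (K : Matrix (Fin m) (Fin m) ℝ)
    (hPsymm : P.IsSymm) (hPpd : P.PosDef)
    (hQsymm : Q.IsSymm) (hQpd : Q.PosDef)
    (hKsymm : K.IsSymm) (hKpd : K.PosDef)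
    (hLyap : Aᵀ * P + P * A = -Q) (hPB : P * B = Cᵀ)
    (x : ℝ → Fin n → ℝ) (x' : ℝ → Fin n → ℝ)
    (Θ Θ' : ℝ → Matrix (Fin p) (Fin m) ℝ) (η : ℝ → Fin p → ℝ)
    (hx : ∀ t i, HasDerivAt (fun s => x s i) (x' t i) t)
    (hΘ : ∀ t i j, HasDerivAt (fun s => Θ s i j) (Θ' t i j) t)
    (hdyn : ∀ t, x' t = A.mulVec (x t) + B.mulVec ((Θ t)ᵀ.mulVec (η t)))
    (hadapt : ∀ t, (Θ' t)ᵀ = -(K⁻¹ * Matrix.vecMulVec (C.mulVec (x t)) (η t))) :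
    ∀ t, HasDerivAt
        (fun s => x s ⬝ᵥ P.mulVec (x s) + (Θ s * K * (Θ s)ᵀ).trace)
        (-(x t ⬝ᵥ Q.mulVec (x t))) t
      ∧ -(x t ⬝ᵥ Q.mulVec (x t)) ≤ 0 := by
  intro t
  have hKdet : IsUnit K.det := isUnit_iff_ne_zero.mpr hKpd.det_pos.ne'
  have hKinvK : K⁻¹ * K = 1 := Matrix.nonsing_inv_mul K hKdet
  have hKKinv : K * K⁻¹ = 1 := Matrix.mul_nonsing_inv K hKdet
  have hKinvsymm : K⁻¹ᵀ = K⁻¹ := by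
    rw [Matrix.transpose_nonsing_inv, hKsymm]
  -- derivative of the quadratic part
  have h1 : HasDerivAt (fun s => x s ⬝ᵥ P.mulVec (x s))
      (x' t ⬝ᵥ P.mulVec (x t) + x t ⬝ᵥ P.mulVec (x' t)) t :=
    hd_dot (hx t) (hd_mulVec P (hx t))
  -- trace rewrite
  have htr : ∀ s, (Θ s * K * (Θ s)ᵀ).trace = ∑ i, (Θ s i) ⬝ᵥ K.mulVec (Θ s i) := by
    intro s
    simp only [Matrix.trace, Matrix.diag, Matrix.mul_apply, Matrix.transpose_apply,
      mulVec, dotProduct, Finset.sum_mul, Finset.mul_sum]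
    apply Finset.sum_congr rfl; intro i _
    apply Finset.sum_congr rfl; intro j _
    apply Finset.sum_congr rfl; intro k _
    have hk : K j k = K k j := by
      have := congrFun (congrFun hKsymm k) j; simpa using this
    rw [hk]; ring
  have h2 : HasDerivAt (fun s => (Θ s * K * (Θ s)ᵀ).trace)
      (∑ i, (Θ' t i ⬝ᵥ K.mulVec (Θ t i) + Θ t i ⬝ᵥ K.mulVec (Θ' t i))) t := by
    have h := HasDerivAt.fun_sum (fun i (_ : i ∈ (Finset.univ : Finset (Fin p))) =>
      hd_dot (u := fun s => Θ s i) (v := fun s => K.mulVec (Θ s i))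
        (fun j => hΘ t i j) (hd_mulVec K (fun j => hΘ t i j)))
    refine HasDerivAt.congr_of_eventuallyEq h ?_
    filter_upwards with s using (htr s)
  have hV : HasDerivAt
      (fun s => x s ⬝ᵥ P.mulVec (x s) + (Θ s * K * (Θ s)ᵀ).trace)
      ((x' t ⬝ᵥ P.mulVec (x t) + x t ⬝ᵥ P.mulVec (x' t)) +
        ∑ i, (Θ' t i ⬝ᵥ K.mulVec (Θ t i) + Θ t i ⬝ᵥ K.mulVec (Θ' t i))) t :=
    h1.add h2
  set a := x t with ha
  set e := η t with he
  set W := Θ t with hW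
  set c := C.mulVec a with hc
  -- rows of Θ'
  have hrow : ∀ i : Fin p, Θ' t i = fun j => -(e i * (K⁻¹.mulVec c) j) := by
    intro i
    funext j
    have h := congrFun (congrFun (hadapt t) j) i
    simp only [Matrix.transpose_apply, Matrix.neg_apply, Matrix.mul_apply,
      Matrix.vecMulVec_apply] at h
    rw [h]
    simp only [mulVec, dotProduct, Finset.mul_sum]
    rw [neg_inj]
    apply Finset.sum_congr rfl; intro k _
    simp only [hc, ha, mulVec, dotProduct]
    ring
  have hKK : ∀ (u z : Fin m → ℝ), K⁻¹.mulVec u ⬝ᵥ K.mulVec z = u ⬝ᵥ z := by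
    intro u z
    rw [mulVec_dot, hKinvsymm, Matrix.mulVec_mulVec, hKinvK, Matrix.one_mulVec]
  have hBP : Bᵀ * P = C := by
    have h := congrArg Matrix.transpose hPB
    rwa [Matrix.transpose_mul, Matrix.transpose_transpose, hPsymm] at h
  -- trace derivative value
  have htrval : (∑ i, (Θ' t i ⬝ᵥ K.mulVec (W i) + W i ⬝ᵥ K.mulVec (Θ' t i)))
      = -(2 * (e ⬝ᵥ W.mulVec c)) := by
    have step : ∀ i : Fin p, Θ' t i ⬝ᵥ K.mulVec (W i) + W i ⬝ᵥ K.mulVec (Θ' t i)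
        = -(2 * (e i * (W.mulVec c i))) := by
      intro i
      rw [hrow i]
      have hfun : (fun j => -(e i * (K⁻¹.mulVec c) j)) = -(e i • K⁻¹.mulVec c) := by
        funext j; simp
      rw [hfun]
      have e1 : (-(e i • K⁻¹.mulVec c)) ⬝ᵥ K.mulVec (W i)
          = -(e i * (K⁻¹.mulVec c ⬝ᵥ K.mulVec (W i))) := by
        rw [neg_dotProduct, smul_dotProduct, smul_eq_mul]
      have e2 : W i ⬝ᵥ K.mulVec (-(e i • K⁻¹.mulVec c))
          = -(e i * (W i ⬝ᵥ K.mulVec (K⁻¹.mulVec c))) := by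
        rw [Matrix.mulVec_neg, dotProduct_neg, Matrix.mulVec_smul, dotProduct_smul,
          smul_eq_mul]
      rw [e1, e2, hKK]
      rw [Matrix.mulVec_mulVec, hKKinv, Matrix.one_mulVec]
      have : W i ⬝ᵥ c = c ⬝ᵥ W i := dotProduct_comm _ _
      have hWc : W.mulVec c i = W i ⬝ᵥ c := rfl
      rw [hWc, dotProduct_comm c (W i)]
      ring
    rw [Finset.sum_congr rfl (fun i _ => step i)]
    simp [dotProduct, Finset.mul_sum]
  -- quadratic derivative value
  have hquad : x' t ⬝ᵥ P.mulVec a + a ⬝ᵥ P.mulVec (x' t)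
      = -(a ⬝ᵥ Q.mulVec a) + 2 * (e ⬝ᵥ W.mulVec c) := by
    rw [hdyn t, ← ha, ← hW, ← he]
    rw [add_dotProduct, Matrix.mulVec_add, dotProduct_add]
    have t1 : A *ᵥ a ⬝ᵥ P *ᵥ a = a ⬝ᵥ (Aᵀ * P) *ᵥ a := by
      rw [mulVec_dot, Matrix.mulVec_mulVec]
    have t3 : a ⬝ᵥ P *ᵥ (A *ᵥ a) = a ⬝ᵥ (P * A) *ᵥ a := by
      rw [Matrix.mulVec_mulVec]
    have t2 : (B *ᵥ (Wᵀ *ᵥ e)) ⬝ᵥ P *ᵥ a = e ⬝ᵥ W *ᵥ c := by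
      rw [mulVec_dot B, Matrix.mulVec_mulVec, hBP, ← hc, mulVec_dot Wᵀ,
        Matrix.transpose_transpose]
    have t4 : a ⬝ᵥ P *ᵥ (B *ᵥ (Wᵀ *ᵥ e)) = e ⬝ᵥ W *ᵥ c := by
      rw [Matrix.mulVec_mulVec, hPB, dotProduct_comm, mulVec_dot,
        Matrix.transpose_transpose, ← hc, mulVec_dot Wᵀ, Matrix.transpose_transpose]
    rw [t1, t2, t3, t4]
    have hsum : a ⬝ᵥ (Aᵀ * P) *ᵥ a + a ⬝ᵥ (P * A) *ᵥ a = -(a ⬝ᵥ Q *ᵥ a) := by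
      rw [← dotProduct_add, ← Matrix.add_mulVec, hLyap, Matrix.neg_mulVec, dotProduct_neg]
    linarith
  rw [htrval, hquad] at hV
  constructor
  · convert hV using 1; ring
  · have h0 : 0 ≤ a ⬝ᵥ Q.mulVec a := by
      have := hQpd.posSemidef.dotProduct_mulVec_nonneg a
      simpa using this
    linarith
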